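/- In the CFI gadget X_k with external pairs P_1,…,P_k each assigned a distinct color, every color-preserving automorphism flips an even number of the pairs P_1,…,P_k. -/

import Mathlib

open scoped Classical

/-- Even-weight binary strings of length `k`. -/
def EvenStr (k : ℕ) := {s : Fin k → Bool // Even ((Finset.univ.filter fun i => s i = true).card)}

instance (k : ℕ) : Fintype (EvenStr k) := by unfold EvenStr; infer_instance

/-- Vertices of the CFI gadget `X_k`: external pairs `P_i = {(i, false), (i, true)}`
and middle vertices given by even-weight strings. -/
def CFIV (k : ℕ) := (Fin k × Bool) ⊕ EvenStr k

instance (k : ℕ) : Fintype (CFIV k) := by unfold CFIV; infer_instance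

def CFIhalf (k : ℕ) : CFIV k → CFIV k → Prop
  | .inl (i, β), .inr s => s.1 i = β
  | _, _ => False

/-- The CFI gadget `X_k`: the middle vertex `s` is adjacent to `a_i = (i, false)`
if `s i = false` and to `b_i = (i, true)` if `s i = true`. -/
def CFI (k : ℕ) : SimpleGraph (CFIV k) where
  Adj x y := CFIhalf k x y ∨ CFIhalf k y x
  symm := ⟨fun x y h => h.symm⟩
  loopless := ⟨fun x h => by rcases h with h | h <;> rcases x with ⟨i, β⟩ | s <;> exact h⟩

/-- Colors of `X_k`: pair `P_i` gets color `i`; all middle vertices get color `k`. -/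
def CFIcolor (k : ℕ) : CFIV k → ℕ
  | .inl (i, _) => i
  | .inr _ => k

/-- `σ` flips the external pair `P_i`. -/
def CFIFlips (k : ℕ) (σ : CFIV k ≃ CFIV k) (i : Fin k) : Prop :=
  σ (.inl (i, false)) = .inl (i, true)

/-- Every color-preserving automorphism of the CFI gadget `X_k` flips an even number
of the external pairs `P_1, …, P_k`. -/
theorem CFI_even_flips (k : ℕ) (σ : CFIV k ≃ CFIV k)
    (hadj : ∀ x y, (CFI k).Adj x y ↔ (CFI k).Adj (σ x) (σ y))
    (hcol : ∀ v, CFIcolor k (σ v) = CFIcolor k v) :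
    Even ((Finset.univ.filter fun i : Fin k => CFIFlips k σ i).card) := by
  let s0 : EvenStr k := ⟨fun _ => false, by simp⟩
  obtain ⟨t, ht⟩ : ∃ t, σ (.inr s0) = .inr t := by
    cases h : σ (.inr s0) with
    | inl p =>
      have hc := hcol (.inr s0)
      rw [h] at hc
      simp only [CFIcolor] at hc
      exact absurd hc (Nat.ne_of_lt p.1.2)
    | inr t => exact ⟨t, rfl⟩
  have key : ∀ i : Fin k, CFIFlips k σ i ↔ t.1 i = true := by
    intro i
    obtain ⟨β, hβ⟩ : ∃ β, σ (.inl (i, false)) = .inl (i, β) := by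
      have hc := hcol (.inl (i, false))
      cases h : σ (.inl (i, false)) with
      | inl p =>
        obtain ⟨j, β⟩ := p
        rw [h] at hc
        simp only [CFIcolor] at hc
        exact ⟨β, by rw [Fin.ext hc]⟩
      | inr s =>
        rw [h] at hc
        simp only [CFIcolor] at hc
        exact absurd hc.symm (Nat.ne_of_lt i.2)
    have hadj0 : (CFI k).Adj (.inl (i, false)) (.inr s0) := (show CFIhalf k (.inl (i, false)) (.inr s0) ∨ CFIhalf k (.inr s0) (.inl (i, false)) from Or.inl (show s0.1 i = false from rfl))
    have h2 := (hadj _ _).mp hadj0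
    rw [hβ, ht] at h2
    have htβ : t.1 i = β := by
      rcases (show CFIhalf k _ _ ∨ CFIhalf k _ _ from h2) with h | h
      · exact h
      · exact h.elim
    unfold CFIFlips
    rw [hβ]
    constructor
    · intro hf
      have : β = true := by injection hf with h'; injection h' with h1 h2
      rw [htβ, this]
    · intro h'
      rw [htβ] at h'
      rw [h']
  have heq : (Finset.univ.filter fun i : Fin k => CFIFlips k σ i)
      = (Finset.univ.filter fun i => t.1 i = true) := by
    apply Finset.filter_congr
    intro i _
    simp [key i]
  rw [heq]
  exact t.2
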